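/- Let x* = −G·(b₁; b₂), and let x ∈ ℝⁿ be feasible (B·x + b₂ = 0) with ‖b₁ + A·x‖₂ = ‖b₁ + A·x*‖₂. Then x = x*; that is, x* is the unique minimizer of ‖b₁ + A·x‖₂ over the feasible set. -/

import Mathlib

open Matrix

/-- Uniqueness of the minimizer `x* = -G·(b₁; b₂)` of the linearly constrained
least-squares problem: any feasible `x` (i.e. `B·x + b₂ = 0`) attaining the same
residual norm `‖b₁ + A·x‖₂ = ‖b₁ + A·x*‖₂` must equal `x*`. -/
theorem uniqueness_of_condensed_solution
    (n N r : ℕ) (hn : 0 < n) (hN : 0 < N) (hr : 0 < r)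
    (A : Matrix (Fin N) (Fin n) ℝ) (B : Matrix (Fin r) (Fin n) ℝ)
    (M : Matrix (Fin n ⊕ Fin r) (Fin n ⊕ Fin r) ℝ)
    (hM : M = Matrix.fromBlocks (Aᵀ * A) Bᵀ B 0)
    (hMinv : IsUnit M)
    (G : Matrix (Fin n) (Fin N ⊕ Fin r) ℝ)
    (hG : G = (Matrix.fromCols (1 : Matrix (Fin n) (Fin n) ℝ) 0 : Matrix (Fin n) (Fin n ⊕ Fin r) ℝ) * M⁻¹ *
        Matrix.fromBlocks Aᵀ 0 0 (1 : Matrix (Fin r) (Fin r) ℝ))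
    (b₁ : Fin N → ℝ) (b₂ : Fin r → ℝ)
    (xstar : Fin n → ℝ) (hx : xstar = -(G.mulVec (Sum.elim b₁ b₂))) :
    ∀ x : Fin n → ℝ, B.mulVec x + b₂ = 0 →
      ‖(EuclideanSpace.equiv (Fin N) ℝ).symm (b₁ + A.mulVec x)‖ =
        ‖(EuclideanSpace.equiv (Fin N) ℝ).symm (b₁ + A.mulVec xstar)‖ →
      x = xstar := by
  intro x hfeas hnorm
  -- set y = M⁻¹ * (Aᵀb₁; b₂)
  set y : Fin n ⊕ Fin r → ℝ := M⁻¹.mulVec (Sum.elim (Aᵀ.mulVec b₁) b₂) with hy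
  have hblk : (Matrix.fromBlocks Aᵀ 0 0 (1 : Matrix (Fin r) (Fin r) ℝ)).mulVec
      (Sum.elim b₁ b₂) = Sum.elim (Aᵀ.mulVec b₁) b₂ := by
    rw [Matrix.fromBlocks_mulVec]
    simp
  have hxstar : xstar = -(y ∘ Sum.inl) := by
    rw [hx, hG, ← Matrix.mulVec_mulVec, ← Matrix.mulVec_mulVec, hblk, ← hy]
    congr 1
    have : y = Sum.elim (y ∘ Sum.inl) (y ∘ Sum.inr) := (Sum.elim_comp_inl_inr y).symm
    rw [this, Matrix.fromCols_mulVec_sumElim]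
    simp
  have hMy : M.mulVec y = Sum.elim (Aᵀ.mulVec b₁) b₂ := by
    rw [hy, Matrix.mulVec_mulVec, Matrix.mul_nonsing_inv M
      ((Matrix.isUnit_iff_isUnit_det M).mp hMinv), Matrix.one_mulVec]
  have hMy' : Sum.elim ((Aᵀ * A).mulVec (y ∘ Sum.inl) + Bᵀ.mulVec (y ∘ Sum.inr))
      (B.mulVec (y ∘ Sum.inl)) = Sum.elim (Aᵀ.mulVec b₁) b₂ := by
    have := hMy
    rw [hM, ← Sum.elim_comp_inl_inr y, Matrix.fromBlocks_mulVec] at this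
    simpa using this
  have h1 : (Aᵀ * A).mulVec (y ∘ Sum.inl) + Bᵀ.mulVec (y ∘ Sum.inr) = Aᵀ.mulVec b₁ :=
    funext fun i => congrFun hMy' (Sum.inl i)
  have h2 : B.mulVec (y ∘ Sum.inl) = b₂ := funext fun i => congrFun hMy' (Sum.inr i)
  set lam : Fin r → ℝ := y ∘ Sum.inr with hlam
  -- stationarity: Aᵀ(b₁ + A x*) = Bᵀ lam
  have hstat : Aᵀ.mulVec (b₁ + A.mulVec xstar) = Bᵀ.mulVec lam := by
    rw [hxstar, Matrix.mulVec_add, Matrix.mulVec_mulVec, Matrix.mulVec_neg]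
    have : (Aᵀ * A).mulVec (y ∘ Sum.inl) = Aᵀ.mulVec b₁ - Bᵀ.mulVec lam := by
      rw [← h1]; abel
    rw [this]; abel
  -- feasibility of x*
  have hfeas' : B.mulVec xstar = -b₂ := by
    rw [hxstar, Matrix.mulVec_neg, h2]
  set d : Fin n → ℝ := x - xstar with hd
  have hBd : B.mulVec d = 0 := by
    rw [hd, Matrix.mulVec_sub, hfeas', sub_neg_eq_add]
    rw [eq_neg_of_add_eq_zero_left hfeas]; abel
  -- residuals
  set w : Fin N → ℝ := b₁ + A.mulVec xstar with hw
  have hux : b₁ + A.mulVec x = w + A.mulVec d := by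
    rw [hw, hd, Matrix.mulVec_sub]; abel
  -- cross term is zero
  have hcross : w ⬝ᵥ A.mulVec d = 0 := by
    have : w ⬝ᵥ A.mulVec d = Aᵀ.mulVec w ⬝ᵥ d := by
      rw [Matrix.dotProduct_mulVec, Matrix.mulVec_transpose]
    rw [this, hw, hstat, Matrix.mulVec_transpose, ← Matrix.dotProduct_mulVec, hBd]
    simp
  -- from norm equality, dot products equal
  have hdot : (w + A.mulVec d) ⬝ᵥ (w + A.mulVec d) = w ⬝ᵥ w := by
    have h := congrArg (· ^ 2) hnorm
    simp only [EuclideanSpace.norm_eq] at h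
    rw [Real.sq_sqrt (by positivity), Real.sq_sqrt (by positivity)] at h
    simp only [Real.norm_eq_abs, sq_abs] at h
    rw [← hux]
    simpa [dotProduct, pow_two, EuclideanSpace.equiv] using h
  have hAd : A.mulVec d = 0 := by
    have : A.mulVec d ⬝ᵥ A.mulVec d = 0 := by
      have hsym : A.mulVec d ⬝ᵥ w = 0 := by
        rw [dotProduct_comm]; exact hcross
      have := hdot
      simp only [add_dotProduct, dotProduct_add, hcross, hsym] at this
      linarith
    exact dotProduct_self_eq_zero.mp this
  -- conclude d = 0 via invertibility of M
  have hMd : M.mulVec (Sum.elim d 0) = 0 := by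
    have hAAd : (Aᵀ * A).mulVec d = 0 := by
      rw [← Matrix.mulVec_mulVec, hAd, Matrix.mulVec_zero]
    rw [hM, Matrix.fromBlocks_mulVec]
    have e1 : (Sum.elim d (0 : Fin r → ℝ)) ∘ Sum.inl = d := rfl
    have e2 : (Sum.elim d (0 : Fin r → ℝ)) ∘ Sum.inr = 0 := rfl
    rw [e1, e2, hAAd, hBd]
    simp
  have hinj := Matrix.mulVec_injective_iff_isUnit.mpr hMinv
  have : Sum.elim d (0 : Fin r → ℝ) = 0 := by
    apply hinj
    rw [hMd, Matrix.mulVec_zero]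
  have hd0 : d = 0 := funext fun i => congrFun this (Sum.inl i)
  have := hd0
  rw [hd, sub_eq_zero] at this
  exact this
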